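/- Let a > √3 and c(a) = (9/8)(a + 1/a). The point (0, 0, -c(a)/3) is an equilibrium of the system Ṁ₁ = -(1/a)M₂M₃ - (3/2)M₂, Ṁ₂ = a M₁M₃ + (3/2)M₁, Ṁ₃ = (1/a - a)M₁M₂, and every solution M : ℝ → ℝ³ of this system whose initial value satisfies a M₁(0)² + (1/a)M₂(0)² - 3M₃(0) - c(a) = 0 and M₁(0)² + M₂(0)² + M₃(0)² = c(a)²/9 and M(0) ≠ (0, 0, -c(a)/3) is not periodic, i.e. there is no T > 0 with M(t+T) = M(t) for all t ∈ ℝ. -/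

import Mathlib

open Real

set_option maxHeartbeats 2000000 in
/-- For `a > √3`, the point `(0, 0, -c(a)/3)` is an equilibrium of the SU(2)
Lie–Poisson system, and every solution starting on the zero Hamiltonian level
and the sphere of radius `c(a)/3` other than the equilibrium is not periodic. -/
theorem stmt_1 (a : ℝ) (ha : Real.sqrt 3 < a) (c : ℝ) (hc : c = 9 / 8 * (a + 1 / a)) :
    (fun p : ℝ × ℝ × ℝ =>
        (-(1 / a) * p.2.1 * p.2.2 - 3 / 2 * p.2.1,
          a * p.1 * p.2.2 + 3 / 2 * p.1,
          (1 / a - a) * p.1 * p.2.1)) (0, 0, -c / 3) = (0, 0, 0) ∧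
    ∀ M₁ M₂ M₃ : ℝ → ℝ,
      (∀ t, HasDerivAt M₁ (-(1 / a) * M₂ t * M₃ t - 3 / 2 * M₂ t) t) →
      (∀ t, HasDerivAt M₂ (a * M₁ t * M₃ t + 3 / 2 * M₁ t) t) →
      (∀ t, HasDerivAt M₃ ((1 / a - a) * M₁ t * M₂ t) t) →
      a * M₁ 0 ^ 2 + (1 / a) * M₂ 0 ^ 2 - 3 * M₃ 0 - c = 0 →
      M₁ 0 ^ 2 + M₂ 0 ^ 2 + M₃ 0 ^ 2 = c ^ 2 / 9 →
      (M₁ 0, M₂ 0, M₃ 0) ≠ (0, 0, -c / 3) →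
      ¬ ∃ T : ℝ, 0 < T ∧ ∀ t : ℝ,
        (M₁ (t + T), M₂ (t + T), M₃ (t + T)) = (M₁ t, M₂ t, M₃ t) := by
  have h3pos : (0:ℝ) < Real.sqrt 3 := Real.sqrt_pos.mpr (by norm_num)
  have ha0 : 0 < a := lt_trans h3pos ha
  have ha0' : a ≠ 0 := ne_of_gt ha0
  have ha3 : 3 < a ^ 2 := by
    nlinarith [Real.sq_sqrt (show (0:ℝ) ≤ 3 by norm_num), Real.sqrt_nonneg 3]
  have hc' : 8 * a * c = 9 * a ^ 2 + 9 := by rw [hc]; field_simp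
  constructor
  · norm_num
  intro M₁ M₂ M₃ h1 h2 h3 hH0 hK0 hne
  rintro ⟨T, hT, hp⟩
  -- conservation of the Hamiltonian
  have dH : ∀ t, HasDerivAt (fun s => a * M₁ s ^ 2 + 1 / a * M₂ s ^ 2 - 3 * M₃ s - c) 0 t := by
    intro t
    have h := (((((h1 t).pow 2).const_mul a).add (((h2 t).pow 2).const_mul (1/a))).sub
      ((h3 t).const_mul 3)).sub_const c
    refine h.congr_deriv ?_
    ring
  have hHc : ∀ t, a * M₁ t ^ 2 + 1 / a * M₂ t ^ 2 - 3 * M₃ t - c = 0 := by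
    intro t
    have hconst := is_const_of_deriv_eq_zero (fun s => (dH s).differentiableAt)
      (fun s => (dH s).deriv) t 0
    exact hconst.trans hH0
  -- conservation of the Casimir
  have dK : ∀ t, HasDerivAt (fun s => M₁ s ^ 2 + M₂ s ^ 2 + M₃ s ^ 2) 0 t := by
    intro t
    have h := (((h1 t).pow 2).add ((h2 t).pow 2)).add ((h3 t).pow 2)
    refine h.congr_deriv ?_
    ring
  have hKc : ∀ t, M₁ t ^ 2 + M₂ t ^ 2 + M₃ t ^ 2 = c ^ 2 / 9 := by
    intro t
    have hconst := is_const_of_deriv_eq_zero (fun s => (dK s).differentiableAt)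
      (fun s => (dK s).deriv) t 0
    exact hconst.trans hK0
  have hHc2 : ∀ t, a ^ 2 * M₁ t ^ 2 + M₂ t ^ 2 - 3 * a * M₃ t - a * c = 0 := by
    intro t
    have h := hHc t
    field_simp at h
    linear_combination h
  obtain ⟨b1, hb1_def⟩ : ∃ x : ℝ, x = 3 * a - 2 * c / 3 := ⟨_, rfl⟩
  obtain ⟨B, hB_def⟩ : ∃ x : ℝ, x = 2 * a ^ 2 * c / 3 - 3 * a := ⟨_, rfl⟩
  have hb1 : 0 < b1 := by rw [hb1_def]; nlinarith [hc', ha0, ha3, mul_pos ha0 ha0]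
  have hB : 0 < B := by rw [hB_def]; nlinarith [hc', ha0, ha3, mul_pos ha0 ha0]
  have J1 : ∀ t, (a ^ 2 - 1) * M₁ t ^ 2 = (M₃ t + c/3) * (b1 + (M₃ t + c/3)) := by
    intro t; rw [hb1_def]; linear_combination hHc2 t - hKc t
  have J2 : ∀ t, (a ^ 2 - 1) * M₂ t ^ 2 = (M₃ t + c/3) * (B - a ^ 2 * (M₃ t + c/3)) := by
    intro t; rw [hB_def]; linear_combination a ^ 2 * hKc t - hHc2 t
  have ha1 : (0:ℝ) < a ^ 2 - 1 := by nlinarith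
  have key : ∀ t, 0 ≤ (M₃ t + c / 3) * (B - a ^ 2 * (M₃ t + c / 3)) := by
    intro t
    rw [← J2 t]
    exact mul_nonneg ha1.le (sq_nonneg _)
  have unneg : ∀ t, 0 ≤ M₃ t + c / 3 := by
    intro t
    by_contra hcon
    push_neg at hcon
    have h1 : 0 < B - a ^ 2 * (M₃ t + c / 3) := by
      have h2 := mul_pos (show (0:ℝ) < a ^ 2 by positivity) (neg_pos.2 hcon)
      nlinarith [hB]
    have h3 := mul_neg_of_neg_of_pos hcon h1
    linarith [key t]
  have ubd : ∀ t, a ^ 2 * (M₃ t + c / 3) ≤ B := by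
    intro t
    by_contra hcon
    push_neg at hcon
    rcases eq_or_lt_of_le (unneg t) with h | h
    · rw [← h] at hcon
      simp at hcon
      linarith [hB]
    · have h3 := mul_neg_of_pos_of_neg h (show B - a ^ 2 * (M₃ t + c / 3) < 0 by linarith)
      linarith [key t]
  -- the initial point is not the equilibrium
  have hu0 : 0 < M₃ 0 + c / 3 := by
    rcases eq_or_lt_of_le (unneg 0) with h | h
    · exfalso
      apply hne
      have hM1 : M₁ 0 = 0 := by
        have h1' : (a ^ 2 - 1) * M₁ 0 ^ 2 = 0 := by rw [J1 0, ← h]; ring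
        have h2' : M₁ 0 ^ 2 = 0 := by
          rcases mul_eq_zero.mp h1' with h' | h'
          · exact absurd h' (ne_of_gt ha1)
          · exact h'
        exact pow_eq_zero_iff (by norm_num) |>.mp h2'
      have hM2 : M₂ 0 = 0 := by
        have h1' : (a ^ 2 - 1) * M₂ 0 ^ 2 = 0 := by rw [J2 0, ← h]; ring
        have h2' : M₂ 0 ^ 2 = 0 := by
          rcases mul_eq_zero.mp h1' with h' | h'
          · exact absurd h' (ne_of_gt ha1)
          · exact h'
        exact pow_eq_zero_iff (by norm_num) |>.mp h2'
      have hM3 : M₃ 0 = -c / 3 := by linarith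
      rw [hM1, hM2, hM3]
    · exact h
  -- periodicity of u = M₃ + c/3
  have hMper : ∀ t, M₃ (t + T) = M₃ t := fun t => congrArg (fun p : ℝ × ℝ × ℝ => p.2.2) (hp t)
  have hper : Function.Periodic (fun t => M₃ t + c / 3) T := by
    intro t; simp [hMper t]
  have hud : ∀ t, HasDerivAt (fun s => M₃ s + c / 3) ((1/a - a) * M₁ t * M₂ t) t :=
    fun t => (h3 t).add_const _
  have hdiff : Differentiable ℝ (fun s => M₃ s + c / 3) := fun t => (hud t).differentiableAt
  have hcont : Continuous (fun s => M₃ s + c / 3) := hdiff.continuous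
  obtain ⟨t₀, ht₀mem, ht₀min⟩ := (isCompact_Icc (a := (0:ℝ)) (b := T)).exists_isMinOn
    ⟨0, Set.left_mem_Icc.mpr hT.le⟩ hcont.continuousOn
  have hglob : ∀ t, M₃ t₀ + c / 3 ≤ M₃ t + c / 3 := by
    intro t
    obtain ⟨y, hy, hxy⟩ := hper.exists_mem_Ico₀ hT t
    have h' := isMinOn_iff.mp ht₀min y (Set.Ico_subset_Icc_self hy)
    calc M₃ t₀ + c / 3 ≤ M₃ y + c / 3 := h'
      _ = M₃ t + c / 3 := hxy.symm
  -- key identity for the derivative of u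
  have hau : ∀ t, (a * ((1/a - a) * M₁ t * M₂ t)) ^ 2
      = (M₃ t + c/3) ^ 2 * ((b1 + (M₃ t + c/3)) * (B - a ^ 2 * (M₃ t + c/3))) := by
    intro t
    have hstep : (a * ((1/a - a) * M₁ t * M₂ t)) ^ 2
        = ((a ^ 2 - 1) * M₁ t ^ 2) * ((a ^ 2 - 1) * M₂ t ^ 2) := by
      field_simp
      ring
    rw [hstep, J1 t, J2 t]; ring
  -- derivative vanishes at the minimum
  have hloc : IsLocalMin (fun s => M₃ s + c / 3) t₀ := Filter.Eventually.of_forall hglob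
  have hder0 : (1/a - a) * M₁ t₀ * M₂ t₀ = 0 := hloc.hasDerivAt_eq_zero (hud t₀)
  rcases eq_or_lt_of_le (unneg t₀) with h | h
  · -- minimum value zero: Gronwall-type argument shows u 0 = 0, contradiction
    obtain ⟨K', hK'_def⟩ : ∃ x : ℝ, x = (b1 + 2 * B) / a := ⟨_, rfl⟩
    have hK'nn : 0 ≤ K' := by rw [hK'_def]; positivity
    have haK' : a * K' = b1 + 2 * B := by rw [hK'_def]; field_simp
    have hbound : ∀ t, ((1/a - a) * M₁ t * M₂ t) ^ 2 ≤ (K' * (M₃ t + c/3)) ^ 2 := by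
      intro t
      have hxB : M₃ t + c / 3 ≤ B := by
        have := mul_nonneg ha1.le (unneg t)
        linarith [ubd t]
      have haxnn : 0 ≤ a ^ 2 * (M₃ t + c / 3) := mul_nonneg (sq_nonneg a) (unneg t)
      have hp1 : (b1 + (M₃ t + c/3)) * (B - a ^ 2 * (M₃ t + c/3)) ≤ (b1 + 2 * B) ^ 2 := by
        have e1 : (b1 + (M₃ t + c/3)) * (B - a ^ 2 * (M₃ t + c/3)) ≤ (b1 + B) * B :=
          mul_le_mul (by linarith) (by linarith [ubd t]) (by linarith [ubd t]) (by linarith)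
        nlinarith [e1, hb1, hB, sq_nonneg b1, sq_nonneg B, mul_pos hb1 hB]
      have h1' : (a * ((1/a - a) * M₁ t * M₂ t)) ^ 2 ≤ (a * (K' * (M₃ t + c/3))) ^ 2 := by
        rw [hau t, show a * (K' * (M₃ t + c/3)) = (b1 + 2*B) * (M₃ t + c/3) by
          rw [← haK']; ring]
        exact (mul_le_mul_of_nonneg_left hp1 (sq_nonneg (M₃ t + c/3))).trans
          (le_of_eq (by ring))
      have h2' : a ^ 2 * ((1/a - a) * M₁ t * M₂ t) ^ 2
          ≤ a ^ 2 * (K' * (M₃ t + c/3)) ^ 2 := by nlinarith [h1']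
      exact le_of_mul_le_mul_left h2' (by positivity)
    have hexp : ∀ s : ℝ, HasDerivAt (fun t => Real.exp (K' * t)) (Real.exp (K' * s) * K') s := by
      intro s
      simpa using ((hasDerivAt_id s).const_mul K').exp
    have hgmono : Monotone (fun t => (M₃ t + c / 3) * Real.exp (K' * t)) := by
      apply monotone_of_hasDerivAt_nonneg
        (f' := fun t => ((1/a - a) * M₁ t * M₂ t) * Real.exp (K' * t)
          + (M₃ t + c / 3) * (Real.exp (K' * t) * K'))
      · intro t
        exact (hud t).mul (hexp t)
      · intro t
        have he := Real.exp_pos (K' * t)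
        have hKu : 0 ≤ K' * (M₃ t + c / 3) := mul_nonneg hK'nn (unneg t)
        have hs : 0 ≤ (1/a - a) * M₁ t * M₂ t + K' * (M₃ t + c/3) := by
          nlinarith [hbound t, hKu]
        have := mul_nonneg hs he.le
        simp only [Pi.zero_apply]
        nlinarith [this]
    have h0le : (M₃ 0 + c / 3) * Real.exp (K' * 0)
        ≤ (M₃ t₀ + c / 3) * Real.exp (K' * t₀) := hgmono ht₀mem.1
    rw [← h] at h0le
    norm_num at h0le
    linarith
  · -- positive minimum: u is constant and the equation forces a² = 3
    have hfac : (M₃ t₀ + c/3) ^ 2 * ((b1 + (M₃ t₀ + c/3)) * (B - a ^ 2 * (M₃ t₀ + c/3))) = 0 := by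
      rw [← hau t₀, hder0]; ring
    have hB0 : B - a ^ 2 * (M₃ t₀ + c/3) = 0 := by
      have h1' : 0 < (M₃ t₀ + c/3) ^ 2 * (b1 + (M₃ t₀ + c/3)) :=
        mul_pos (pow_pos h 2) (by linarith)
      have h2' : 0 ≤ B - a ^ 2 * (M₃ t₀ + c/3) := by linarith [ubd t₀]
      nlinarith [hfac, h1', h2']
    have hconst : ∀ t, M₃ t = M₃ t₀ := by
      intro t
      have hle : M₃ t ≤ M₃ t₀ := by nlinarith [ubd t, hB0, ha3, hglob t]
      linarith [hglob t]
    have hM2z : ∀ t, M₂ t = 0 := by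
      intro t
      have hJ := J2 t
      rw [hconst t, hB0, mul_zero] at hJ
      have h2' : M₂ t ^ 2 = 0 := by
        rcases mul_eq_zero.mp hJ with h' | h'
        · exact absurd h' (ne_of_gt ha1)
        · exact h'
      exact pow_eq_zero_iff (by norm_num) |>.mp h2'
    have hM2d : a * M₁ t₀ * M₃ t₀ + 3 / 2 * M₁ t₀ = 0 := by
      have hz : HasDerivAt M₂ 0 t₀ := by
        have hfz : M₂ = fun _ => 0 := funext hM2z
        rw [hfz]; exact hasDerivAt_const _ _
      exact (h2 t₀).unique hz
    have hM1ne : M₁ t₀ ≠ 0 := by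
      intro hz
      have hJ := J1 t₀
      rw [hz] at hJ
      nlinarith [hb1, h]
    have hM3eq : a * M₃ t₀ + 3 / 2 = 0 := by
      have hmul : M₁ t₀ * (a * M₃ t₀ + 3 / 2) = 0 := by linear_combination hM2d
      rcases mul_eq_zero.mp hmul with h' | h'
      · exact absurd h' hM1ne
      · exact h'
    have hM3eq' : a ^ 2 * M₃ t₀ = -(3 / 2) * a := by linear_combination a * hM3eq
    have hc'' : 8 * a ^ 2 * c = (9 * a ^ 2 + 9) * a := by linear_combination a * hc'
    have hB0' : 2 * a ^ 2 * c / 3 - 3 * a - a ^ 2 * (M₃ t₀ + c/3) = 0 := by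
      rw [← hB_def]; exact hB0
    nlinarith [hB0', hM3eq', hc'', mul_pos ha0 (show (0:ℝ) < a ^ 2 - 3 by linarith)]
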